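/- Let F : ℝᵐ → ℝᵐ be C², with flow having periodic orbit x^γ(t) of period T and frequency ω, and let Φ be a C³ phase map satisfying ∇Φ(x)·F(x) = ω in a neighborhood of the orbit. Then along the orbit, (d/dt)∇²Φ(x^γ(t)) = -∇²F (∇Φ ⊗ I) - (DF)ᵀ ∇²Φ - ∇²Φ DF, where ∇²F = [∇²F₁ ⋯ ∇²F_m] is the m×m² matrix of Hessians of the components of F and all quantities are evaluated at x^γ(t). -/

import Mathlib

set_option maxHeartbeats 1600000

private lemma clm_apply_sum_single {m : ℕ} (L : (Fin m → ℝ) →L[ℝ] ℝ) (v : Fin m → ℝ) :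
    L v = ∑ k, v k * L (Pi.single k 1) := by
  conv_lhs => rw [← Finset.univ_sum_single v]
  rw [map_sum]
  refine Finset.sum_congr rfl fun k _ => ?_
  have h : (Pi.single k (v k) : Fin m → ℝ) = v k • (Pi.single k 1 : Fin m → ℝ) := by
    funext x; simp [Pi.single_apply]
  rw [h, map_smul, smul_eq_mul]

theorem stmt_11 {m : ℕ}
    (F : (Fin m → ℝ) → (Fin m → ℝ)) (Φ : (Fin m → ℝ) → ℝ)
    (U : Set (Fin m → ℝ)) (hU : IsOpen U)
    (hF : ContDiffOn ℝ 2 F U) (hΦ : ContDiffOn ℝ 3 Φ U)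
    (γ : ℝ → Fin m → ℝ) (T ω : ℝ) (hT : 0 < T) (hω : ω = 2 * Real.pi / T)
    (hper : Function.Periodic γ T)
    (hγU : ∀ t, γ t ∈ U)
    (hγ : ∀ t, HasDerivAt γ (F (γ t)) t)
    (hphase : ∀ x ∈ U, (∑ i, fderiv ℝ Φ x (Pi.single i 1) * F x i) = ω)
    (Z : (Fin m → ℝ) → Fin m → ℝ)
    (hZ : ∀ x i, Z x i = fderiv ℝ Φ x (Pi.single i 1))
    (Hs : (Fin m → ℝ) → Fin m → Fin m → ℝ)
    (hHs : ∀ x i j, Hs x i j =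
      fderiv ℝ (fun y => fderiv ℝ Φ y (Pi.single j 1)) x (Pi.single i 1))
    (DF : (Fin m → ℝ) → Fin m → Fin m → ℝ)
    (hDF : ∀ x i j, DF x i j = fderiv ℝ (fun y => F y i) x (Pi.single j 1))
    (D2F : (Fin m → ℝ) → Fin m → Fin m → Fin m → ℝ)
    (hD2F : ∀ x k i j, D2F x k i j =
      fderiv ℝ (fun y => fderiv ℝ (fun z => F z k) y (Pi.single j 1)) x (Pi.single i 1)) :
    ∀ t (i j : Fin m),
      HasDerivAt (fun s => Hs (γ s) i j)
        (-(∑ k, D2F (γ t) k i j * Z (γ t) k)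
          - (∑ k, DF (γ t) k i * Hs (γ t) k j)
          - (∑ k, Hs (γ t) i k * DF (γ t) k j)) t := by
  classical
  set g : (Fin m → ℝ) → ((Fin m → ℝ) →L[ℝ] ℝ) := fderiv ℝ Φ with hgdef
  set g' := fderiv ℝ g with hg'def
  set g'' := fderiv ℝ g' with hg''def
  set F' := fderiv ℝ F with hF'def
  set F'' := fderiv ℝ F' with hF''def
  -- smoothness of derivative functions
  have hg2 : ContDiffOn ℝ 2 g U := hΦ.fderiv_of_isOpen hU (by norm_num)
  have hg'1 : ContDiffOn ℝ 1 g' U := hg2.fderiv_of_isOpen hU (by norm_num)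
  have hF'1 : ContDiffOn ℝ 1 F' U := hF.fderiv_of_isOpen hU (by norm_num)
  -- pointwise differentiability
  have hdΦ : ∀ x ∈ U, HasFDerivAt Φ (g x) x := fun x hx =>
    ((hΦ.differentiableOn (by norm_num)).differentiableAt (hU.mem_nhds hx)).hasFDerivAt
  have hdg : ∀ x ∈ U, HasFDerivAt g (g' x) x := fun x hx =>
    ((hg2.differentiableOn (by norm_num)).differentiableAt (hU.mem_nhds hx)).hasFDerivAt
  have hdg' : ∀ x ∈ U, HasFDerivAt g' (g'' x) x := fun x hx =>
    ((hg'1.differentiableOn (by norm_num)).differentiableAt (hU.mem_nhds hx)).hasFDerivAt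
  have hdF : ∀ x ∈ U, HasFDerivAt F (F' x) x := fun x hx =>
    ((hF.differentiableOn (by norm_num)).differentiableAt (hU.mem_nhds hx)).hasFDerivAt
  have hdF' : ∀ x ∈ U, HasFDerivAt F' (F'' x) x := fun x hx =>
    ((hF'1.differentiableOn (by norm_num)).differentiableAt (hU.mem_nhds hx)).hasFDerivAt
  -- component-level HasFDerivAt facts
  have hA : ∀ x ∈ U, ∀ k : Fin m, HasFDerivAt (fun y => g y (Pi.single k 1))
      ((ContinuousLinearMap.apply ℝ ℝ (Pi.single k 1)).comp (g' x)) x := fun x hx k =>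
    (ContinuousLinearMap.apply ℝ ℝ (Pi.single k 1 : Fin m → ℝ)).hasFDerivAt.comp x (hdg x hx)
  have hB : ∀ x ∈ U, ∀ k : Fin m, HasFDerivAt (fun y => F y k)
      ((ContinuousLinearMap.proj (R := ℝ) (φ := fun _ : Fin m => ℝ) k).comp (F' x)) x :=
    fun x hx k =>
    (ContinuousLinearMap.proj (R := ℝ) (φ := fun _ : Fin m => ℝ) k).hasFDerivAt.comp x (hdF x hx)
  have hC : ∀ x ∈ U, ∀ a b : Fin m, HasFDerivAt (fun y => g' y (Pi.single a 1) (Pi.single b 1))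
      ((ContinuousLinearMap.apply ℝ ℝ (Pi.single b 1)).comp
        ((ContinuousLinearMap.apply ℝ ((Fin m → ℝ) →L[ℝ] ℝ) (Pi.single a 1)).comp (g'' x))) x := by
    intro x hx a b
    have step1 : HasFDerivAt (fun y => g' y (Pi.single a 1))
        ((ContinuousLinearMap.apply ℝ ((Fin m → ℝ) →L[ℝ] ℝ) (Pi.single a 1)).comp (g'' x)) x := by
      exact (ContinuousLinearMap.apply ℝ ((Fin m → ℝ) →L[ℝ] ℝ)
          (Pi.single a 1 : Fin m → ℝ)).hasFDerivAt.comp (g := ⇑(ContinuousLinearMap.apply ℝ ((Fin m → ℝ) →L[ℝ] ℝ) (Pi.single a 1 : Fin m → ℝ))) x (hdg' x hx)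
    exact (ContinuousLinearMap.apply ℝ ℝ (Pi.single b 1 : Fin m → ℝ)).hasFDerivAt.comp x step1
  have hD : ∀ x ∈ U, ∀ (b k : Fin m), HasFDerivAt (fun y => F' y (Pi.single b 1) k)
      ((ContinuousLinearMap.proj (R := ℝ) (φ := fun _ : Fin m => ℝ) k).comp
        ((ContinuousLinearMap.apply ℝ (Fin m → ℝ) (Pi.single b 1)).comp (F'' x))) x := by
    intro x hx b k
    have step1 : HasFDerivAt (fun y => F' y (Pi.single b 1))
        ((ContinuousLinearMap.apply ℝ (Fin m → ℝ) (Pi.single b 1)).comp (F'' x)) x := by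
      have h0 := (ContinuousLinearMap.apply ℝ (Fin m → ℝ)
          (Pi.single b 1 : Fin m → ℝ)).hasFDerivAt (x := F' x)
      exact h0.comp x (hdF' x hx)
    exact (ContinuousLinearMap.proj (R := ℝ) (φ := fun _ : Fin m => ℝ) k).hasFDerivAt.comp x step1
  -- symmetry of second derivative of Φ
  have symΦ : ∀ x ∈ U, ∀ v w, g' x v w = g' x w v := fun x hx =>
    (hΦ.contDiffAt (hU.mem_nhds hx)).isSymmSndFDerivAt (by norm_num)
  -- symmetry of second derivative of g (first two slots of third derivative of Φ)
  have symg : ∀ x ∈ U, ∀ v w, g'' x v w = g'' x w v := fun x hx =>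
    (hg2.contDiffAt (hU.mem_nhds hx)).isSymmSndFDerivAt (by norm_num)
  -- symmetry of last two slots of third derivative
  have sym3 : ∀ x ∈ U, ∀ (w : Fin m → ℝ) (a b : Fin m),
      g'' x w (Pi.single a 1) (Pi.single b 1) = g'' x w (Pi.single b 1) (Pi.single a 1) := by
    intro x hx w a b
    have h1 : (fun y => g' y (Pi.single a 1) (Pi.single b 1))
        =ᶠ[nhds x] (fun y => g' y (Pi.single b 1) (Pi.single a 1)) := by
      filter_upwards [hU.mem_nhds hx] with y hy using symΦ y hy _ _
    have e1 := (hC x hx a b).fderiv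
    have e2 := (hC x hx b a).fderiv
    have e3 := h1.fderiv_eq (𝕜 := ℝ)
    rw [e1, e2] at e3
    have := congrArg (fun L : (Fin m → ℝ) →L[ℝ] ℝ => L w) e3
    simpa using this
  -- evaluation of Hs, DF, D2F in terms of g', F', F''
  have hHsE : ∀ x ∈ U, ∀ a b : Fin m, Hs x a b = g' x (Pi.single a 1) (Pi.single b 1) := by
    intro x hx a b
    rw [hHs]
    have := (hA x hx b).fderiv
    rw [show (fun y => fderiv ℝ Φ y (Pi.single b 1)) = (fun y => g y (Pi.single b 1)) from rfl,
      this]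
    simp
  have hDFE : ∀ x ∈ U, ∀ a b : Fin m, DF x a b = F' x (Pi.single b 1) a := by
    intro x hx a b
    rw [hDF, (hB x hx a).fderiv]
    simp
  have hD2FE : ∀ x ∈ U, ∀ k a b : Fin m,
      D2F x k a b = F'' x (Pi.single a 1) (Pi.single b 1) k := by
    intro x hx k a b
    rw [hD2F]
    have h1 : (fun y => fderiv ℝ (fun z => F z k) y (Pi.single b 1))
        =ᶠ[nhds x] (fun y => F' y (Pi.single b 1) k) := by
      filter_upwards [hU.mem_nhds hx] with y hy
      rw [(hB y hy k).fderiv]; simp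
    rw [h1.fderiv_eq (𝕜 := ℝ), (hD x hx b k).fderiv]
    simp
  -- Step B : first differentiation of the phase identity
  have stepB : ∀ x ∈ U, ∀ b : Fin m,
      ∑ k, (g' x (Pi.single b 1) (Pi.single k 1) * F x k
        + g x (Pi.single k 1) * F' x (Pi.single b 1) k) = 0 := by
    intro x hx b
    have hsum : HasFDerivAt (fun y => ∑ k, g y (Pi.single k 1) * F y k)
        (∑ k, (g x (Pi.single k 1) •
            ((ContinuousLinearMap.proj (R := ℝ) (φ := fun _ : Fin m => ℝ) k).comp (F' x))
          + F x k • ((ContinuousLinearMap.apply ℝ ℝ (Pi.single k 1)).comp (g' x)))) x :=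
      by refine HasFDerivAt.fun_sum fun k _ => ?_; exact (hA x hx k).mul (hB x hx k)
    have h0 : HasFDerivAt (fun y => ∑ k, g y (Pi.single k 1) * F y k) (0 : (Fin m → ℝ) →L[ℝ] ℝ) x := by
      apply (hasFDerivAt_const ω x).congr_of_eventuallyEq
      filter_upwards [hU.mem_nhds hx] with y hy using hphase y hy
    have huniq := hsum.unique h0
    have h2 := congrArg (fun L : (Fin m → ℝ) →L[ℝ] ℝ => L (Pi.single b 1)) huniq
    simp only [ContinuousLinearMap.coe_sum', Finset.sum_apply,
      ContinuousLinearMap.add_apply, ContinuousLinearMap.smul_apply,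
      ContinuousLinearMap.coe_comp', Function.comp_apply,
      ContinuousLinearMap.apply_apply, ContinuousLinearMap.proj_apply,
      smul_eq_mul, ContinuousLinearMap.zero_apply] at h2
    rw [← h2]
    exact Finset.sum_congr rfl fun k _ => by ring
  -- Step C : second differentiation
  have stepC : ∀ x ∈ U, ∀ a b : Fin m,
      ∑ k, (g'' x (Pi.single a 1) (Pi.single b 1) (Pi.single k 1) * F x k
        + g' x (Pi.single b 1) (Pi.single k 1) * F' x (Pi.single a 1) k
        + g' x (Pi.single a 1) (Pi.single k 1) * F' x (Pi.single b 1) k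
        + g x (Pi.single k 1) * F'' x (Pi.single a 1) (Pi.single b 1) k) = 0 := by
    intro x hx a b
    have hsum : HasFDerivAt
        (fun y => ∑ k, (g' y (Pi.single b 1) (Pi.single k 1) * F y k
          + g y (Pi.single k 1) * F' y (Pi.single b 1) k))
        (∑ k, ((g' x (Pi.single b 1) (Pi.single k 1) •
            ((ContinuousLinearMap.proj (R := ℝ) (φ := fun _ : Fin m => ℝ) k).comp (F' x))
          + F x k • ((ContinuousLinearMap.apply ℝ ℝ (Pi.single k 1)).comp
            ((ContinuousLinearMap.apply ℝ ((Fin m → ℝ) →L[ℝ] ℝ) (Pi.single b 1)).comp (g'' x))))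
          + (g x (Pi.single k 1) •
            ((ContinuousLinearMap.proj (R := ℝ) (φ := fun _ : Fin m => ℝ) k).comp
              ((ContinuousLinearMap.apply ℝ (Fin m → ℝ) (Pi.single b 1)).comp (F'' x)))
          + F' x (Pi.single b 1) k •
            ((ContinuousLinearMap.apply ℝ ℝ (Pi.single k 1)).comp (g' x))))) x :=
      by
        refine HasFDerivAt.fun_sum fun k _ => ?_
        exact ((hC x hx b k).mul (hB x hx k)).add ((hA x hx k).mul (hD x hx b k))
    have h0 : HasFDerivAt
        (fun y => ∑ k, (g' y (Pi.single b 1) (Pi.single k 1) * F y k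
          + g y (Pi.single k 1) * F' y (Pi.single b 1) k)) (0 : (Fin m → ℝ) →L[ℝ] ℝ) x := by
      apply (hasFDerivAt_const (0:ℝ) x).congr_of_eventuallyEq
      filter_upwards [hU.mem_nhds hx] with y hy using stepB y hy b
    have huniq := hsum.unique h0
    have h2 := congrArg (fun L : (Fin m → ℝ) →L[ℝ] ℝ => L (Pi.single a 1)) huniq
    simp only [ContinuousLinearMap.coe_sum', Finset.sum_apply,
      ContinuousLinearMap.add_apply, ContinuousLinearMap.smul_apply,
      ContinuousLinearMap.coe_comp', Function.comp_apply,
      ContinuousLinearMap.apply_apply, ContinuousLinearMap.proj_apply,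
      smul_eq_mul, ContinuousLinearMap.zero_apply] at h2
    rw [← h2]
    exact Finset.sum_congr rfl fun k _ => by ring
  -- main goal
  intro t i j
  have hx0U := hγU t
  set x0 := γ t with hx0def
  -- derivative of s ↦ Hs (γ s) i j
  have heq : (fun y => Hs y i j)
      =ᶠ[nhds x0] (fun y => g' y (Pi.single i 1) (Pi.single j 1)) := by
    filter_upwards [hU.mem_nhds hx0U] with y hy using hHsE y hy i j
  have hHder : HasFDerivAt (fun y => Hs y i j)
      ((ContinuousLinearMap.apply ℝ ℝ (Pi.single j 1)).comp
        ((ContinuousLinearMap.apply ℝ ((Fin m → ℝ) →L[ℝ] ℝ) (Pi.single i 1)).comp (g'' x0))) x0 :=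
    (hC x0 hx0U i j).congr_of_eventuallyEq heq
  have hcomp := hHder.comp_hasDerivAt t (hγ t)
  have hval : (((ContinuousLinearMap.apply ℝ ℝ (Pi.single j 1)).comp
        ((ContinuousLinearMap.apply ℝ ((Fin m → ℝ) →L[ℝ] ℝ) (Pi.single i 1)).comp (g'' x0)))
          (F x0))
      = -(∑ k, D2F x0 k i j * Z x0 k) - (∑ k, DF x0 k i * Hs x0 k j)
        - (∑ k, Hs x0 i k * DF x0 k j) := by
    rw [clm_apply_sum_single]
    have hterm : ∀ k : Fin m,
        F x0 k * (((ContinuousLinearMap.apply ℝ ℝ (Pi.single j 1)).comp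
          ((ContinuousLinearMap.apply ℝ ((Fin m → ℝ) →L[ℝ] ℝ) (Pi.single i 1)).comp (g'' x0)))
            (Pi.single k 1))
        = F x0 k * g'' x0 (Pi.single i 1) (Pi.single j 1) (Pi.single k 1) := by
      intro k
      have h1 : (((ContinuousLinearMap.apply ℝ ℝ (Pi.single j 1)).comp
          ((ContinuousLinearMap.apply ℝ ((Fin m → ℝ) →L[ℝ] ℝ) (Pi.single i 1)).comp (g'' x0)))
            (Pi.single k 1))
          = g'' x0 (Pi.single k 1) (Pi.single i 1) (Pi.single j 1) := by simp
      rw [h1]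
      have h2 : g'' x0 (Pi.single k 1) (Pi.single i 1) (Pi.single j 1)
          = g'' x0 (Pi.single i 1) (Pi.single k 1) (Pi.single j 1) := by
        rw [symg x0 hx0U (Pi.single k 1) (Pi.single i 1)]
      rw [h2, sym3 x0 hx0U (Pi.single i 1) k j]
    rw [Finset.sum_congr rfl fun k _ => hterm k]
    -- use stepC
    have hC0 := stepC x0 hx0U i j
    have hsplit : (∑ k, g'' x0 (Pi.single i 1) (Pi.single j 1) (Pi.single k 1) * F x0 k)
        + (∑ k, g' x0 (Pi.single j 1) (Pi.single k 1) * F' x0 (Pi.single i 1) k)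
        + (∑ k, g' x0 (Pi.single i 1) (Pi.single k 1) * F' x0 (Pi.single j 1) k)
        + (∑ k, g x0 (Pi.single k 1) * F'' x0 (Pi.single i 1) (Pi.single j 1) k) = 0 := by
      rw [← Finset.sum_add_distrib, ← Finset.sum_add_distrib, ← Finset.sum_add_distrib]
      exact hC0
    have e1 : (∑ k, D2F x0 k i j * Z x0 k)
        = ∑ k, g x0 (Pi.single k 1) * F'' x0 (Pi.single i 1) (Pi.single j 1) k := by
      refine Finset.sum_congr rfl fun k _ => ?_
      rw [hD2FE x0 hx0U k i j, hZ]
      ring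
    have e2 : (∑ k, DF x0 k i * Hs x0 k j)
        = ∑ k, g' x0 (Pi.single j 1) (Pi.single k 1) * F' x0 (Pi.single i 1) k := by
      refine Finset.sum_congr rfl fun k _ => ?_
      rw [hDFE x0 hx0U k i, hHsE x0 hx0U k j, symΦ x0 hx0U (Pi.single k 1) (Pi.single j 1)]
      ring
    have e3 : (∑ k, Hs x0 i k * DF x0 k j)
        = ∑ k, g' x0 (Pi.single i 1) (Pi.single k 1) * F' x0 (Pi.single j 1) k := by
      refine Finset.sum_congr rfl fun k _ => ?_
      rw [hDFE x0 hx0U k j, hHsE x0 hx0U i k]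
    have e0 : (∑ k, F x0 k * g'' x0 (Pi.single i 1) (Pi.single j 1) (Pi.single k 1))
        = ∑ k, g'' x0 (Pi.single i 1) (Pi.single j 1) (Pi.single k 1) * F x0 k := by
      refine Finset.sum_congr rfl fun k _ => by ring
    rw [e0, e1, e2, e3]
    linarith [hsplit]
  rw [hval] at hcomp
  exact hcomp
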